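/- Let G be a standard Gaussian random vector in ℝⁿ and let A be an n×n real matrix with operator norm ‖A‖ ≤ 1. Then there exist standard Gaussian random vectors X, Y in ℝⁿ (defined on a common probability space, not necessarily independent) such that A G has the same distribution as (X+Y)/2. -/

import Mathlib

open MeasureTheory ProbabilityTheory Matrix

/-- The standard Gaussian measure on `ℝⁿ`. -/
noncomputable def stdGaussian (n : ℕ) : Measure (Fin n → ℝ) :=
  Measure.pi fun _ => gaussianReal 0 1

theorem lintegral_pi_prod : ∀ (m : ℕ) (μ : Fin m → Measure ℝ), (∀ i, SigmaFinite (μ i)) →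
    ∀ (f : Fin m → ℝ → ENNReal), (∀ i, Measurable (f i)) →
    ∫⁻ x, ∏ i, f i (x i) ∂(Measure.pi μ) = ∏ i, ∫⁻ y, f i y ∂(μ i) := by
  intro m
  induction m with
  | zero => intro μ _ f _; simp
  | succ m ih =>
    intro μ hσ f hf
    haveI := hσ
    have hg : Measurable (fun p : ℝ × (Fin m → ℝ) => f 0 p.1 * ∏ i : Fin m, f i.succ (p.2 i)) := by
      exact ((hf 0).comp measurable_fst).mul
        (Finset.measurable_prod _ fun i _ => (hf i.succ).comp ((measurable_pi_apply i).comp measurable_snd))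
    have := (measurePreserving_piFinSuccAbove μ 0).lintegral_comp hg
    have heq : ∀ x : Fin (m+1) → ℝ,
        (fun p : ℝ × (Fin m → ℝ) => f 0 p.1 * ∏ i : Fin m, f i.succ (p.2 i))
          (MeasurableEquiv.piFinSuccAbove (fun _ => ℝ) 0 x) = ∏ i, f i (x i) := by
      intro x
      rw [Fin.prod_univ_succ]
      simp [MeasurableEquiv.piFinSuccAbove, Fin.zero_succAbove, Fin.tail]
    simp_rw [heq] at this
    have hm : Measurable (fun y : Fin m → ℝ => ∏ i : Fin m, f i.succ (y i)) :=
      Finset.measurable_prod _ (fun i _ => (hf i.succ).comp (measurable_pi_apply i))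
    rw [this, lintegral_prod_mul ((hf 0).aemeasurable) hm.aemeasurable]
    rw [ih _ (fun i => inferInstance) _ (fun i => hf i.succ), Fin.prod_univ_succ]
    simp [Fin.zero_succAbove]

theorem stdGaussian_eq_withDensity (m : ℕ) :
    (Measure.pi fun _ : Fin m => gaussianReal 0 1) =
      (volume : Measure (Fin m → ℝ)).withDensity (fun x => ∏ i, gaussianPDF 0 1 (x i)) := by
  refine Measure.pi_eq fun s hs => ?_
  rw [withDensity_apply _ (MeasurableSet.univ_pi hs)]
  have : ∀ x : Fin m → ℝ, (Set.univ.pi s).indicator (fun x => ∏ i, gaussianPDF 0 1 (x i)) x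
      = ∏ i, (s i).indicator (gaussianPDF 0 1) (x i) := by
    intro x
    by_cases hx : x ∈ Set.univ.pi s
    · rw [Set.indicator_of_mem hx]
      refine Finset.prod_congr rfl fun i _ => ?_
      rw [Set.indicator_of_mem (hx i (Set.mem_univ i))]
    · rw [Set.indicator_of_notMem hx]
      obtain ⟨i, hi⟩ := by simpa [Set.mem_pi] using hx
      exact (Finset.prod_eq_zero (Finset.mem_univ i) (by rw [Set.indicator_of_notMem hi])).symm
  rw [← lintegral_indicator (MeasurableSet.univ_pi hs)]
  simp_rw [this]
  rw [volume_pi, lintegral_pi_prod m _ (fun _ => inferInstance) _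
    (fun i => (measurable_gaussianPDF 0 1).indicator (hs i))]
  refine Finset.prod_congr rfl fun i _ => ?_
  rw [lintegral_indicator (hs i), gaussianReal_apply 0 one_ne_zero (s i),
    ← withDensity_apply _ (hs i)]

open Real in
theorem prod_gaussianPDF_congr {m : ℕ} {x y : Fin m → ℝ}
    (h : ∑ i, x i ^ 2 = ∑ i, y i ^ 2) :
    ∏ i, gaussianPDF 0 1 (x i) = ∏ i, gaussianPDF 0 1 (y i) := by
  have key : ∀ z : Fin m → ℝ, ∏ i, gaussianPDF 0 1 (z i) =
      ENNReal.ofReal ((√(2 * π))⁻¹ ^ m * rexp (-(∑ i, z i ^ 2) / 2)) := by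
    intro z
    simp_rw [gaussianPDF]
    rw [← ENNReal.ofReal_prod_of_nonneg (fun i _ => gaussianPDFReal_nonneg 0 1 (z i))]
    congr 1
    simp only [gaussianPDFReal, NNReal.coe_one, mul_one, sub_zero]
    rw [Finset.prod_mul_distrib, Finset.prod_const, ← Real.exp_sum]
    congr 2
    · simp
    · rw [← Finset.sum_div, ← Finset.sum_neg_distrib]
  rw [key x, key y, h]

theorem measurable_mulVec {m k : ℕ} (M : Matrix (Fin m) (Fin k) ℝ) :
    Measurable (M.mulVec : (Fin k → ℝ) → (Fin m → ℝ)) := by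
  have : Continuous (Matrix.toLin' M) := LinearMap.continuous_on_pi _
  have h2 : (Matrix.toLin' M : (Fin k → ℝ) → (Fin m → ℝ)) = M.mulVec := by
    funext x; exact Matrix.toLin'_apply M x
  rw [← h2]
  exact this.measurable

theorem sum_sq_mulVec_eq {m : ℕ} (Q : Matrix (Fin m) (Fin m) ℝ) (hQ : Qᵀ * Q = 1)
    (x : Fin m → ℝ) : ∑ i, (Q.mulVec x i) ^ 2 = ∑ i, (x i) ^ 2 := by
  have h1 : (Q.mulVec x) ⬝ᵥ (Q.mulVec x) = x ⬝ᵥ x := by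
    rw [Matrix.dotProduct_mulVec, ← Matrix.mulVec_transpose, Matrix.mulVec_mulVec, hQ,
      Matrix.one_mulVec]
  simpa [dotProduct, pow_two] using h1

theorem stdGaussian_map_orth {m : ℕ} (Q : Matrix (Fin m) (Fin m) ℝ) (hQ : Qᵀ * Q = 1) :
    (Measure.pi fun _ : Fin m => gaussianReal 0 1).map Q.mulVec
      = Measure.pi fun _ : Fin m => gaussianReal 0 1 := by
  have hdet : Q.det ≠ 0 := by
    intro h
    have := congrArg Matrix.det hQ
    rw [Matrix.det_mul, Matrix.det_transpose, h] at this
    simp at this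
  have habs : |Q.det| = 1 := by
    have := congrArg Matrix.det hQ
    rw [Matrix.det_mul, Matrix.det_transpose] at this
    simp only [Matrix.det_one] at this
    nlinarith [abs_nonneg Q.det, sq_abs Q.det]
  have hT : Measurable (Q.mulVec : (Fin m → ℝ) → (Fin m → ℝ)) := measurable_mulVec Q
  have hg : Measurable (fun x : Fin m → ℝ => ∏ i, gaussianPDF 0 1 (x i)) :=
    Finset.measurable_prod _ fun i _ => (measurable_gaussianPDF 0 1).comp (measurable_pi_apply i)
  have hmapvol : (volume : Measure (Fin m → ℝ)).map Q.mulVec = volume := by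
    have h2 : (Matrix.toLin' Q : (Fin m → ℝ) → (Fin m → ℝ)) = Q.mulVec := by
      funext x; exact Matrix.toLin'_apply Q x
    rw [← h2, Real.map_matrix_volume_pi_eq_smul_volume_pi hdet]
    rw [abs_inv, habs]
    simp
  rw [stdGaussian_eq_withDensity]
  ext E hE
  rw [Measure.map_apply hT hE, withDensity_apply _ (hT hE), withDensity_apply _ hE]
  calc ∫⁻ x in Q.mulVec ⁻¹' E, ∏ i, gaussianPDF 0 1 (x i) ∂volume
      = ∫⁻ x in Q.mulVec ⁻¹' E, ∏ i, gaussianPDF 0 1 (Q.mulVec x i) ∂volume := by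
        refine lintegral_congr fun x => ?_
        exact (prod_gaussianPDF_congr (sum_sq_mulVec_eq Q hQ x)).symm
    _ = ∫⁻ y in E, ∏ i, gaussianPDF 0 1 (y i) ∂(volume.map Q.mulVec) :=
        (setLIntegral_map hE hg hT).symm
    _ = ∫⁻ y in E, ∏ i, gaussianPDF 0 1 (y i) ∂volume := by rw [hmapvol]

theorem stdGaussian_map_restrict {n N : ℕ} (h : n ≤ N) :
    (Measure.pi fun _ : Fin N => gaussianReal 0 1).map
        (fun (y : Fin N → ℝ) (j : Fin n) => y (Fin.castLE h j))
      = Measure.pi fun _ : Fin n => gaussianReal 0 1 := by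
  have hmeas : Measurable (fun (y : Fin N → ℝ) (j : Fin n) => y (Fin.castLE h j)) :=
    measurable_pi_lambda _ fun j => measurable_pi_apply _
  refine (Measure.pi_eq fun s hs => ?_).symm
  rw [Measure.map_apply hmeas (MeasurableSet.univ_pi hs)]
  have hpre : (fun (y : Fin N → ℝ) (j : Fin n) => y (Fin.castLE h j)) ⁻¹' (Set.univ.pi s)
      = Set.univ.pi (fun j : Fin N => if hj : (j : ℕ) < n then s ⟨j, hj⟩ else Set.univ) := by
    ext y
    simp only [Set.mem_preimage, Set.mem_pi, Set.mem_univ, true_implies]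
    constructor
    · intro hy j
      by_cases hj : (j : ℕ) < n
      · simpa [hj] using hy ⟨j, hj⟩
      · simp [hj]
    · intro hy i
      have := hy (Fin.castLE h i)
      simpa [i.isLt] using this
  rw [hpre, Measure.pi_pi]
  rw [← Finset.prod_subset (Finset.subset_univ ((Finset.univ : Finset (Fin n)).image (Fin.castLE h)))
    (fun j _ hj => by
      have : ¬ ((j : ℕ) < n) := fun hlt =>
        hj (Finset.mem_image.2 ⟨⟨j, hlt⟩, Finset.mem_univ _, by simp⟩)
      simp [this])]
  rw [Finset.prod_image (fun i _ j _ hij => Fin.castLE_injective h hij)]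
  refine Finset.prod_congr rfl fun i _ => ?_
  simp [i.isLt]

theorem stdGaussian_map_coiso {n N : ℕ} (h : n ≤ N) (M : Matrix (Fin n) (Fin N) ℝ)
    (hM : M * Mᵀ = 1) :
    (Measure.pi fun _ : Fin N => gaussianReal 0 1).map M.mulVec
      = Measure.pi fun _ : Fin n => gaussianReal 0 1 := by
  classical
  set v : Fin N → EuclideanSpace ℝ (Fin N) :=
    fun j => if hj : (j : ℕ) < n then WithLp.toLp 2 (fun l => M ⟨j, hj⟩ l) else 0 with hv
  set s : Set (Fin N) := {j | (j : ℕ) < n} with hsdef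
  have hMentry : ∀ (a b : Fin n), ∑ l, M a l * M b l = if a = b then 1 else 0 := by
    intro a b
    have := congrFun (congrFun hM a) b
    simpa [Matrix.mul_apply, Matrix.one_apply] using this
  have hortho : Orthonormal ℝ (s.restrict v) := by
    rw [orthonormal_iff_ite]
    intro i j
    have hi : ((i : Fin N) : ℕ) < n := i.2
    have hj : ((j : Fin N) : ℕ) < n := j.2
    have hinner : (inner ℝ (s.restrict v i) (s.restrict v j) : ℝ)
        = ∑ l, M ⟨(i : Fin N), hi⟩ l * M ⟨(j : Fin N), hj⟩ l := by
      simp only [Set.restrict_apply, hv, hi, hj, dif_pos]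
      rw [PiLp.inner_apply]
      simp [RCLike.inner_apply, Set.restrict, hi, hj, mul_comm]
    rw [hinner, hMentry]
    congr 1
    simp only [eq_iff_iff]
    constructor
    · intro he
      have : ((⟨(i : Fin N), hi⟩ : Fin n) : ℕ) = ((⟨(j : Fin N), hj⟩ : Fin n) : ℕ) :=
        congrArg Fin.val he
      exact Subtype.ext (Fin.ext this)
    · intro he
      exact Fin.ext (congrArg Fin.val (Subtype.ext_iff.mp he) : ((i:Fin N):ℕ) = ((j:Fin N):ℕ))
  obtain ⟨b, hb⟩ := hortho.exists_orthonormalBasis_extension_of_card_eq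
    (by simp)
  set Q : Matrix (Fin N) (Fin N) ℝ := Matrix.of fun k l => b k l with hQdef
  have hQQ : Q * Qᵀ = 1 := by
    ext k l
    have := (orthonormal_iff_ite.mp b.orthonormal) k l
    rw [PiLp.inner_apply] at this
    simpa [Matrix.mul_apply, hQdef, Matrix.one_apply, RCLike.inner_apply, mul_comm] using this
  have hQt : Qᵀ * Q = 1 := mul_eq_one_comm.mp hQQ
  have hrow : ∀ (i : Fin n) (l : Fin N), M i l = Q (Fin.castLE h i) l := by
    intro i l
    have hmem : (Fin.castLE h i) ∈ s := by
      simp [hsdef]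
    have := hb (Fin.castLE h i) hmem
    have h2 := congrArg (· l) this
    simpa [hQdef, hv, i.isLt] using h2.symm
  have hcomp : (M.mulVec : (Fin N → ℝ) → (Fin n → ℝ))
      = (fun (y : Fin N → ℝ) (j : Fin n) => y (Fin.castLE h j)) ∘ Q.mulVec := by
    funext x j
    simp only [Function.comp_apply, Matrix.mulVec, dotProduct]
    exact Finset.sum_congr rfl fun l _ => by rw [hrow]
  rw [hcomp, ← Measure.map_map (measurable_pi_lambda _ fun j => measurable_pi_apply _)
    (measurable_mulVec Q), stdGaussian_map_orth Q hQt, stdGaussian_map_restrict h]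

theorem posSemidef_aux {n : ℕ} (A : Matrix (Fin n) (Fin n) ℝ)
    (hA : ∀ x : Fin n → ℝ, ∑ i, (A.mulVec x i) ^ 2 ≤ ∑ i, (x i) ^ 2) :
    (1 - A * Aᵀ).PosSemidef := by
  refine Matrix.PosSemidef.of_dotProduct_mulVec_nonneg ?_ ?_
  · have h1 : (A * Aᵀ).IsHermitian := by
      have := Matrix.isHermitian_mul_conjTranspose_self A
      simpa using this
    simpa using Matrix.isHermitian_one.sub h1
  · intro x
    have hstar : star x = x := by simp
    rw [hstar, Matrix.sub_mulVec, Matrix.one_mulVec, dotProduct_sub, sub_nonneg]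
    set y := Aᵀ.mulVec x with hy
    have hterm : x ⬝ᵥ (A * Aᵀ).mulVec x = y ⬝ᵥ y := by
      rw [← Matrix.mulVec_mulVec, Matrix.dotProduct_mulVec, ← Matrix.mulVec_transpose]
    rw [hterm]
    have hyy : y ⬝ᵥ y = ∑ i, (y i) ^ 2 := by simp [dotProduct, pow_two]
    have hxx : x ⬝ᵥ x = ∑ i, (x i) ^ 2 := by simp [dotProduct, pow_two]
    rw [hyy, hxx]
    set a := ∑ i, (y i) ^ 2 with ha
    set b := ∑ i, (x i) ^ 2 with hb
    have ha0 : 0 ≤ a := Finset.sum_nonneg fun i _ => sq_nonneg _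
    have hb0 : 0 ≤ b := Finset.sum_nonneg fun i _ => sq_nonneg _
    -- a = x ⬝ᵥ (A *ᵥ y)
    have hthis : x ⬝ᵥ A.mulVec y = y ⬝ᵥ y := by
      rw [Matrix.dotProduct_mulVec, ← Matrix.mulVec_transpose, ← hy]
    have hkey : a = ∑ i, x i * (A.mulVec y) i := by
      rw [← hyy, ← hthis]; simp [dotProduct]
    have hcs : (∑ i, x i * (A.mulVec y) i) ^ 2 ≤ b * (∑ i, (A.mulVec y i) ^ 2) :=
      Finset.sum_mul_sq_le_sq_mul_sq _ _ _
    have hAy : ∑ i, (A.mulVec y i) ^ 2 ≤ a := hA y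
    have hsq : a ^ 2 ≤ b * a := by
      calc a ^ 2 = (∑ i, x i * (A.mulVec y) i) ^ 2 := by rw [hkey]
        _ ≤ b * (∑ i, (A.mulVec y i) ^ 2) := hcs
        _ ≤ b * a := by exact mul_le_mul_of_nonneg_left hAy hb0
    rcases eq_or_lt_of_le ha0 with h0 | h0
    · rw [← h0]; exact hb0
    · nlinarith


/-- If `G` is a standard Gaussian random vector in `ℝⁿ` and `A` is an `n × n` matrix with
(Euclidean) operator norm at most `1`, then `A G` has the same distribution as `(X+Y)/2` for
two standard Gaussian random vectors `X, Y` defined on a common probability space. -/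
theorem matrix_apply_gaussian_eq_average_of_two_std_gaussians (n : ℕ)
    (A : Matrix (Fin n) (Fin n) ℝ)
    (hA : ∀ x : Fin n → ℝ, ∑ i, (A.mulVec x i) ^ 2 ≤ ∑ i, (x i) ^ 2) :
    ∃ (Ω : Type) (_ : MeasurableSpace Ω) (μ : Measure Ω) (_ : IsProbabilityMeasure μ)
      (X Y : Ω → Fin n → ℝ), Measurable X ∧ Measurable Y ∧
      μ.map X = stdGaussian n ∧ μ.map Y = stdGaussian n ∧
      μ.map (fun ω => (2 : ℝ)⁻¹ • (X ω + Y ω)) = (stdGaussian n).map A.mulVec := by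
  classical
  have hPSD := posSemidef_aux A hA
  open MatrixOrder in set S : Matrix (Fin n) (Fin n) ℝ := CFC.sqrt (1 - A * Aᵀ) with hSdef
  have hSsym : Sᵀ = S := by
    open MatrixOrder in exact (CFC.sqrt_nonneg (1 - A * Aᵀ)).posSemidef.1
  have hSS : S * S = 1 - A * Aᵀ := by
    open MatrixOrder in exact CFC.sqrt_mul_sqrt_self _ hPSD.nonneg
  haveI : IsProbabilityMeasure (stdGaussian n) := by
    unfold _root_.stdGaussian; infer_instance
  set μ : Measure ((Fin n → ℝ) × (Fin n → ℝ)) := (stdGaussian n).prod (stdGaussian n) with hμ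
  haveI : IsProbabilityMeasure μ := by rw [hμ]; infer_instance
  set X : ((Fin n → ℝ) × (Fin n → ℝ)) → (Fin n → ℝ) :=
    fun p => A.mulVec p.1 + S.mulVec p.2 with hX
  set Y : ((Fin n → ℝ) × (Fin n → ℝ)) → (Fin n → ℝ) :=
    fun p => A.mulVec p.1 - S.mulVec p.2 with hY
  have hXm : Measurable X :=
    ((measurable_mulVec A).comp measurable_fst).add ((measurable_mulVec S).comp measurable_snd)
  have hYm : Measurable Y :=
    ((measurable_mulVec A).comp measurable_fst).sub ((measurable_mulVec S).comp measurable_snd)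
  -- the measure-preserving map from ℝ^{n+n}
  set F : (Fin (n + n) → ℝ) → ((Fin n → ℝ) × (Fin n → ℝ)) :=
    (MeasurableEquiv.sumPiEquivProdPi (fun _ : Fin n ⊕ Fin n => ℝ)) ∘
      (MeasurableEquiv.piCongrLeft (fun _ : Fin (n + n) => ℝ) finSumFinEquiv).symm with hF
  have hmp : MeasurePreserving F (Measure.pi fun _ : Fin (n + n) => gaussianReal 0 1) μ := by
    have h1 := (measurePreserving_piCongrLeft
      (fun _ : Fin (n + n) => gaussianReal 0 1) finSumFinEquiv).symm
    have h2 := measurePreserving_sumPiEquivProdPi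
      (fun _ : Fin n ⊕ Fin n => gaussianReal 0 1)
    exact h2.comp h1
  have hFz : ∀ z : Fin (n + n) → ℝ,
      F z = (fun i : Fin n => z (finSumFinEquiv (Sum.inl i)),
             fun i : Fin n => z (finSumFinEquiv (Sum.inr i))) := by
    intro z
    have h1 : (MeasurableEquiv.piCongrLeft (fun _ : Fin (n + n) => ℝ) finSumFinEquiv).symm z
        = fun j : Fin n ⊕ Fin n => z (finSumFinEquiv j) := by
      funext j
      exact Equiv.piCongrLeft_symm_apply _ _ z j
    rw [hF]
    simp only [Function.comp_apply, h1]
    rfl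
  -- the coisometry matrices
  set C₁ : Matrix (Fin n) (Fin n ⊕ Fin n) ℝ := Matrix.fromCols A S with hC₁
  set C₂ : Matrix (Fin n) (Fin n ⊕ Fin n) ℝ := Matrix.fromCols A (-S) with hC₂
  set M₁ : Matrix (Fin n) (Fin (n + n)) ℝ := C₁.submatrix id finSumFinEquiv.symm with hM₁
  set M₂ : Matrix (Fin n) (Fin (n + n)) ℝ := C₂.submatrix id finSumFinEquiv.symm with hM₂
  have hCC : ∀ (C : Matrix (Fin n) (Fin n ⊕ Fin n) ℝ), C * Cᵀ = 1 →
      (C.submatrix id finSumFinEquiv.symm) * (C.submatrix id finSumFinEquiv.symm)ᵀ = 1 := by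
    intro C hC
    rw [Matrix.transpose_submatrix, Matrix.submatrix_mul_equiv, hC, Matrix.submatrix_id_id]
  have hC₁1 : C₁ * C₁ᵀ = 1 := by
    rw [hC₁, Matrix.transpose_fromCols, Matrix.fromCols_mul_fromRows, hSsym, hSS]
    abel
  have hC₂1 : C₂ * C₂ᵀ = 1 := by
    rw [hC₂, Matrix.transpose_fromCols, Matrix.fromCols_mul_fromRows,
      Matrix.transpose_neg, hSsym, Matrix.neg_mul, Matrix.mul_neg, neg_neg, hSS]
    abel
  have hXF : X ∘ F = M₁.mulVec := by
    funext z
    rw [Function.comp_apply, hFz z, hX]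
    simp only
    rw [hM₁, Matrix.submatrix_mulVec_equiv, Equiv.symm_symm]
    have : z ∘ finSumFinEquiv = Sum.elim (fun i : Fin n => z (finSumFinEquiv (Sum.inl i)))
        (fun i : Fin n => z (finSumFinEquiv (Sum.inr i))) := by
      funext j; cases j <;> rfl
    rw [this, hC₁, Matrix.fromCols_mulVec_sumElim]
    rfl
  have hYF : Y ∘ F = M₂.mulVec := by
    funext z
    rw [Function.comp_apply, hFz z, hY]
    simp only
    rw [hM₂, Matrix.submatrix_mulVec_equiv, Equiv.symm_symm]
    have : z ∘ finSumFinEquiv = Sum.elim (fun i : Fin n => z (finSumFinEquiv (Sum.inl i)))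
        (fun i : Fin n => z (finSumFinEquiv (Sum.inr i))) := by
      funext j; cases j <;> rfl
    rw [this, hC₂, Matrix.fromCols_mulVec_sumElim, Matrix.neg_mulVec]
    simp [sub_eq_add_neg]
  have hle : n ≤ n + n := Nat.le_add_right n n
  refine ⟨(Fin n → ℝ) × (Fin n → ℝ), inferInstance, μ, inferInstance, X, Y, hXm, hYm, ?_, ?_, ?_⟩
  · rw [← hmp.map_eq, Measure.map_map hXm hmp.measurable, hXF]
    exact stdGaussian_map_coiso hle M₁ (hCC C₁ hC₁1)
  · rw [← hmp.map_eq, Measure.map_map hYm hmp.measurable, hYF]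
    exact stdGaussian_map_coiso hle M₂ (hCC C₂ hC₂1)
  · have havg : (fun ω : (Fin n → ℝ) × (Fin n → ℝ) => (2 : ℝ)⁻¹ • (X ω + Y ω))
        = A.mulVec ∘ Prod.fst := by
      funext p
      rw [hX, hY]
      simp only [Function.comp_apply]
      ext i
      simp only [Pi.smul_apply, Pi.add_apply, Pi.sub_apply, smul_eq_mul]
      ring
    rw [havg, ← Measure.map_map (measurable_mulVec A) measurable_fst, hμ,
      Measure.map_fst_prod]
    simp
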